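/- For every integer N ≥ 3, every 1 ≤ j ≤ N−2 and every α ∈ {+, 0, −}, the operator WB^α_j commutes with each of ρ(E), ρ(F) and ρ(K): [WB^α_j, ρ(E)] = [WB^α_j, ρ(F)] = [WB^α_j, ρ(K)] = 0. -/

import Mathlib

open Matrix Complex BigOperators Finset

noncomputable section

namespace LatticeW

/-- basis states of the chain of `N` spin-1/2 sites -/
abbrev St (N : ℕ) := Fin N → Fin 2
/-- operators on `ℂ^{2^N}` -/
abbrev Op (N : ℕ) := Matrix (St N) (St N) ℂ

def σx : Matrix (Fin 2) (Fin 2) ℂ := !![0, 1; 1, 0]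
def σy : Matrix (Fin 2) (Fin 2) ℂ := !![0, -Complex.I; Complex.I, 0]
def σz : Matrix (Fin 2) (Fin 2) ℂ := !![1, 0; 0, -1]
def σp : Matrix (Fin 2) (Fin 2) ℂ := (1/2 : ℂ) • (σx + Complex.I • σy)
def σm : Matrix (Fin 2) (Fin 2) ℂ := (1/2 : ℂ) • (σx - Complex.I • σy)

/-- the operator acting as `M` on the (0-indexed) site `j` and as the identity
elsewhere; junk value `0` if `j` is out of range. -/
def site (N : ℕ) (j : ℕ) (M : Matrix (Fin 2) (Fin 2) ℂ) : Op N :=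
  if h : j < N then
    (fun v w => if ∀ l, l ≠ (⟨j, h⟩ : Fin N) → v l = w l then M (v ⟨j, h⟩) (w ⟨j, h⟩) else 0)
  else 0

/-- diagonal value of σ^z on a one-site basis state -/
def zval (t : Fin 2) : ℂ := if t = 0 then 1 else -1

/-- Jordan–Wigner creation operator `c_j†` (0-indexed `j`; paper index `j+1`):
`c_j† = i^{j} (∏_{l<j} i σ^z_l) σ^+_j`. -/
def ad (N : ℕ) (j : ℕ) : Op N :=
  Complex.I ^ j •
    (Matrix.diagonal (fun v : St N =>
        ∏ l ∈ Finset.univ.filter (fun l : Fin N => (l : ℕ) < j), (Complex.I * zval (v l)))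
      * site N j σp)

/-- Jordan–Wigner annihilation operator `c_j` (0-indexed `j`):
`c_j = i^{-j} (∏_{l<j} (i σ^z_l)⁻¹) σ^-_j`. -/
def an (N : ℕ) (j : ℕ) : Op N :=
  (Complex.I ^ j)⁻¹ •
    (Matrix.diagonal (fun v : St N =>
        ∏ l ∈ Finset.univ.filter (fun l : Fin N => (l : ℕ) < j), (Complex.I * zval (v l))⁻¹)
      * site N j σm)

/-- Temperley–Lieb density `e_{j+1}` of the paper (0-indexed `j`). -/
def eTL (N : ℕ) (j : ℕ) : Op N :=
  an N j * ad N (j+1) + an N (j+1) * ad N j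
    + Complex.I • (ad N j * an N j - ad N (j+1) * an N (j+1))

/-- the XX Hamiltonian `H = -∑ e_j`. -/
def Hop (N : ℕ) : Op N := -∑ j ∈ Finset.range (N - 1), eTL N j

/-- `ρ(K) = ⊗_j (i σ^z)`. -/
def Kop (N : ℕ) : Op N := Matrix.diagonal (fun v : St N => ∏ l, (Complex.I * zval (v l)))

/-- `ρ(E) = (∑_{j=1}^N i^j c_j†) ρ(K)` (paper indices). -/
def Eop (N : ℕ) : Op N := (∑ j ∈ Finset.range N, Complex.I ^ (j+1) • ad N j) * Kop N

/-- `ρ(F) = ∑_{j=1}^N i^{j-1} c_j` (paper indices). -/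
def Fop (N : ℕ) : Op N := ∑ j ∈ Finset.range N, Complex.I ^ j • an N j

/-- divided power `ρ(e) = ∑_{j1<j2} (-1)^{j1+j2} i^{1-j1-j2} c_{j1}† c_{j2}†` (paper indices). -/
def sl2e (N : ℕ) : Op N :=
  ∑ j2 ∈ Finset.range N, ∑ j1 ∈ Finset.range j2,
    ((-1 : ℂ) ^ (j1 + j2) * (Complex.I ^ (j1 + j2 + 1))⁻¹) • (ad N j1 * ad N j2)

/-- divided power `ρ(f) = ∑_{j1<j2} i^{j1+j2-1} c_{j1} c_{j2}` (paper indices). -/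
def sl2f (N : ℕ) : Op N :=
  ∑ j2 ∈ Finset.range N, ∑ j1 ∈ Finset.range j2,
    (Complex.I ^ (j1 + j2 + 1)) • (an N j1 * an N j2)

/-- `WB^+_{j+1}` of the paper (0-indexed `j`). -/
def WBp (N : ℕ) (j : ℕ) : Op N :=
  (-1 : ℂ) ^ (j+1) •
    (ad N j * ad N (j+1) + Complex.I • (ad N j * ad N (j+2)) - ad N (j+1) * ad N (j+2))

/-- `WB^0_{j+1}` of the paper (0-indexed `j`). -/
def WB0 (N : ℕ) (j : ℕ) : Op N :=
  (-(1/2) : ℂ) •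
    ((1 : Op N) + Complex.I • (ad N j * an N (j+1)) - ad N j * an N (j+2)
      + Complex.I • (ad N (j+1) * an N j) - (2 : ℂ) • (ad N (j+1) * an N (j+1))
      - Complex.I • (ad N (j+1) * an N (j+2)) - ad N (j+2) * an N j
      - Complex.I • (ad N (j+2) * an N (j+1)))

/-- `WB^-_{j+1}` of the paper (0-indexed `j`). -/
def WBm (N : ℕ) (j : ℕ) : Op N :=
  (-1 : ℂ) ^ j •
    (an N j * an N (j+1) + Complex.I • (an N j * an N (j+2)) - an N (j+1) * an N (j+2))

/-- `WB^α_j` with `α = 0 ↦ +`, `α = 1 ↦ 0`, `α = 2 ↦ -`. -/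
def WB (N : ℕ) (α : Fin 3) (j : ℕ) : Op N :=
  match α with
  | 0 => WBp N j
  | 1 => WB0 N j
  | 2 => WBm N j

/-- the Fourier amplitudes `A_k(j)` (both `k` and `j` paper-indexed). -/
def Afun (N k j : ℕ) : ℂ :=
  (1/2 : ℂ) * (1 + Complex.I * Complex.exp (-(Complex.I * (Real.pi : ℂ) * (k : ℂ) / (N : ℂ))))
      * Complex.exp (Complex.I * (Real.pi : ℂ) * (k : ℂ) * (j : ℂ) / (N : ℂ))
  - (1/2 : ℂ) * (1 + Complex.I * Complex.exp (Complex.I * (Real.pi : ℂ) * (k : ℂ) / (N : ℂ)))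
      * Complex.exp (-(Complex.I * (Real.pi : ℂ) * (k : ℂ) * (j : ℂ) / (N : ℂ)))

/-- `θ†_k = ∑_{j=1}^N A_k(j) c_j†` (paper indices). -/
def θd (N k : ℕ) : Op N := ∑ j ∈ Finset.range N, Afun N k (j+1) • ad N j

/-- `θ_k = -i ∑_{j=1}^N A_k(j) c_j` (paper indices). -/
def θa (N k : ℕ) : Op N := (-Complex.I) • ∑ j ∈ Finset.range N, Afun N k (j+1) • an N j

/-- the normalization `sqrt(n/(N sin(πn/N)))` for `n ≠ 0`, and `1/√π` for `n = 0`. -/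
def ηcoef (N : ℕ) (n : ℤ) : ℂ :=
  if n = 0 then ((Real.sqrt Real.pi)⁻¹ : ℝ)
  else ((Real.sqrt ((n : ℝ) / ((N : ℝ) * Real.sin (Real.pi * (n : ℝ) / (N : ℝ)))) : ℝ) : ℂ)

/-- `η^+_n` -/
def ηp (N : ℕ) (n : ℤ) : Op N := ηcoef N n • θd N ((N : ℤ)/2 + n).toNat

/-- `η^-_n` -/
def ηm (N : ℕ) (n : ℤ) : Op N := ηcoef N n • θa N ((N : ℤ)/2 - n).toNat

/-- coefficient `(N/2 - j + (1-(-1)^j)/2) i^j` (paper index `j`). -/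
def γcoef (N j : ℕ) : ℂ :=
  ((N : ℂ)/2 - (j : ℂ) + (1 - (-1 : ℂ)^j)/2) * Complex.I ^ j

/-- the root vector `γ^+`. -/
def γp (N : ℕ) : Op N :=
  (Complex.I * (Real.sqrt Real.pi : ℂ) / (N : ℂ)) •
    ∑ j ∈ Finset.range N, γcoef N (j+1) • ad N j

/-- the root vector `γ^-`. -/
def γm (N : ℕ) : Op N :=
  (-((Real.sqrt Real.pi : ℂ) / (N : ℂ))) •
    ∑ j ∈ Finset.range N, γcoef N (j+1) • an N j

/-- Kronecker delta -/
def kδ (a b : ℤ) : ℂ := if a = b then 1 else 0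

/-- `s(j) = sqrt(sin(πj/N)/j)` with the convention `π/N` at `j = 0`. -/
def sfun (N : ℕ) (j : ℤ) : ℂ :=
  if j = 0 then ((Real.sqrt (Real.pi / (N : ℝ)) : ℝ) : ℂ)
  else ((Real.sqrt (Real.sin (Real.pi * (j : ℝ) / (N : ℝ)) / (j : ℝ)) : ℝ) : ℂ)

/-- the index range `-N/2+1 ≤ j ≤ N/2-1`. -/
def modeRange (N : ℕ) : Finset ℤ := Finset.Icc (-(N : ℤ)/2 + 1) ((N : ℤ)/2 - 1)

/-- the coefficient appearing in `Ĥ^r_n`. -/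
def Hcoef (N : ℕ) (r : ℕ) (n j1 j2 : ℤ) : ℂ :=
  ((Real.cos (Real.pi * ((j1 - j2 : ℤ) : ℝ) / (2 * (N : ℝ))) : ℝ) : ℂ)^r *
      ((-1 : ℂ)^r * kδ (j1 + j2) n + kδ (j1 + j2) (-n))
    - ((Real.sin (Real.pi * ((j1 + j2 : ℤ) : ℝ) / (2 * (N : ℝ))) : ℝ) : ℂ)^r *
      (kδ (j1 - j2) ((N : ℤ) + n) + kδ (j1 - j2) (-(N : ℤ) - n)
        + (-1 : ℂ)^r * kδ (j1 - j2) ((N : ℤ) - n) + (-1 : ℂ)^r * kδ (j1 - j2) (-(N : ℤ) + n))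

/-- the lattice Virasoro mode `Ĥ^r_n`. -/
def Hhat (N : ℕ) (r : ℕ) (n : ℤ) : Op N :=
  ∑ j1 ∈ modeRange N, ∑ j2 ∈ modeRange N,
    (sfun N j1 * sfun N j2 * Hcoef N r n j1 j2) • (ηp N j1 * ηm N j2)

/-- the coefficient `U_{r,n}(j1,j2)`. -/
def Ucoef (N : ℕ) (r : ℕ) (n j1 j2 : ℤ) : ℂ :=
  ((Real.sin (Real.pi * ((j1 - j2 : ℤ) : ℝ) / (2 * (N : ℝ))) : ℝ) : ℂ)
      * ((Real.cos (Real.pi * ((j1 - j2 : ℤ) : ℝ) / (2 * (N : ℝ))) : ℝ) : ℂ)^r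
      * ((-1 : ℂ)^r * kδ (j1 + j2) n + kδ (j1 + j2) (-n))
    + 2 * ((Real.cos (Real.pi * ((j1 + j2 : ℤ) : ℝ) / (2 * (N : ℝ))) : ℝ) : ℂ)
      * ((Real.sin (Real.pi * ((j1 + j2 : ℤ) : ℝ) / (2 * (N : ℝ))) : ℝ) : ℂ)^r
      * (kδ (j1 - j2) (-(N : ℤ) - n) + (-1 : ℂ)^r * kδ (j1 - j2) (-(N : ℤ) + n))

/-- the lattice W-algebra mode `Ŵ^{α,r}_n` with `α = 0 ↦ +`, `α = 1 ↦ 0`, `α = 2 ↦ -`. -/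
def What (N : ℕ) (α : Fin 3) (r : ℕ) (n : ℤ) : Op N :=
  ∑ j1 ∈ modeRange N, ∑ j2 ∈ modeRange N,
    (sfun N j1 * sfun N j2 * Ucoef N r n j1 j2) •
      (match α with
        | 0 => ηp N j1 * ηp N j2
        | 1 => ηp N j1 * ηm N j2 + ηm N j1 * ηp N j2
        | 2 => ηm N j1 * ηm N j2)

/-- the all-spins-down reference state. -/
def downSt (N : ℕ) : St N → ℂ := fun v => if ∀ j, v j = 1 then 1 else 0

/-- the vacuum `|0⟩ = θ†_{N/2} θ†_{N/2+1} ⋯ θ†_{N-1} |↓…↓⟩`. -/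
def vac (N : ℕ) : St N → ℂ :=
  (((List.range (N/2)).map (fun t => θd N (N/2 + t))).prod).mulVec (downSt N)

/-- the logarithmic partner `|0̃⟩ = γ^+ θ†_{N/2+1} ⋯ θ†_{N-1} |↓…↓⟩`. -/
def vacTilde (N : ℕ) : St N → ℂ :=
  (γp N * (((List.range (N/2 - 1)).map (fun t => θd N (N/2 + 1 + t))).prod)).mulVec (downSt N)

/-- the total spin `S^z = ½ ∑_j σ^z_j`. -/
def Sz (N : ℕ) : Op N := (1/2 : ℂ) • ∑ j ∈ Finset.range N, site N j σz

/- ************ XXZ spin-chain at generic q (statement 19) ************ -/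

/-- the single-site diagonal `diag(q, q⁻¹)` evaluated on a basis state. -/
def dq (q : ℂ) : Fin 2 → ℂ := fun t => if t = 0 then q else q⁻¹

/-- the XXZ Temperley–Lieb density `e_{i+1}` of the paper (0-indexed `i`). -/
def eXXZ (N : ℕ) (q : ℂ) (i : ℕ) : Op N :=
  ((q + q⁻¹)/4) • (1 : Op N)
    - (1/2 : ℂ) • (site N i σx * site N (i+1) σx + site N i σy * site N (i+1) σy)
    - ((q + q⁻¹)/4) • (site N i σz * site N (i+1) σz)
    + ((q - q⁻¹)/4) • (site N i σz - site N (i+1) σz)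

/-- the XXZ Hamiltonian with quantum-group symmetric boundary terms. -/
def HXXZ (N : ℕ) (q : ℂ) : Op N :=
  (1/2 : ℂ) • ∑ i ∈ Finset.range (N - 1),
      (site N i σx * site N (i+1) σx + site N i σy * site N (i+1) σy
        + ((q + q⁻¹)/2) • (site N i σz * site N (i+1) σz))
    - ((q - q⁻¹)/4) • (site N 0 σz - site N (N-1) σz)

/-- `K_N = ⊗_j diag(q,q⁻¹)`. -/
def KXXZ (N : ℕ) (q : ℂ) : Op N := Matrix.diagonal (fun v : St N => ∏ l, dq q (v l))

/-- `E_N = ∑_j σ^+_j ⊗ ∏_{l>j} diag(q,q⁻¹)_l`. -/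
def EXXZ (N : ℕ) (q : ℂ) : Op N :=
  ∑ j ∈ Finset.range N,
    site N j σp *
      Matrix.diagonal (fun v : St N =>
        ∏ l ∈ Finset.univ.filter (fun l : Fin N => j < (l : ℕ)), dq q (v l))

/-- `F_N = ∑_j (∏_{l<j} diag(q⁻¹,q)_l) ⊗ σ^-_j`. -/
def FXXZ (N : ℕ) (q : ℂ) : Op N :=
  ∑ j ∈ Finset.range N,
    Matrix.diagonal (fun v : St N =>
        ∏ l ∈ Finset.univ.filter (fun l : Fin N => (l : ℕ) < j), (dq q (v l))⁻¹) *
      site N j σm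

end LatticeW
namespace LatticeW

variable {N : ℕ}

/-- Fin-indexed single-site operator. -/
def fsite (N : ℕ) (a : Fin N) (M : Matrix (Fin 2) (Fin 2) ℂ) : Op N :=
  fun v w => if ∀ l, l ≠ a → v l = w l then M (v a) (w a) else 0

lemma site_eq_fsite {j : ℕ} (h : j < N) (M : Matrix (Fin 2) (Fin 2) ℂ) :
    site N j M = fsite N ⟨j, h⟩ M := by
  unfold site fsite
  exact dif_pos h

lemma site_of_ge {j : ℕ} (h : ¬ j < N) (M : Matrix (Fin 2) (Fin 2) ℂ) : site N j M = 0 := by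
  unfold site; exact dif_neg h

lemma sum_eq_two (a : Fin N) (v : St N) (F : St N → ℂ)
    (hF : ∀ u, ¬ (∀ l, l ≠ a → u l = v l) → F u = 0) :
    ∑ u : St N, F u = ∑ t : Fin 2, F (Function.update v a t) := by
  classical
  rw [← Finset.sum_filter_add_sum_filter_not Finset.univ (fun u => ∀ l, l ≠ a → u l = v l)]
  have h2 : ∑ u ∈ Finset.univ.filter (fun u => ¬ ∀ l, l ≠ a → u l = v l), F u = 0 :=
    Finset.sum_eq_zero (fun u hu => hF u (by simpa using (Finset.mem_filter.mp hu).2))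
  rw [h2, add_zero]
  refine Finset.sum_nbij' (fun u => u a) (fun t => Function.update v a t) ?_ ?_ ?_ ?_ ?_
  · intro u hu; exact Finset.mem_univ _
  · intro t ht
    simp only [Finset.mem_filter, Finset.mem_univ, true_and]
    intro l hl; exact Function.update_of_ne hl _ _
  · intro u hu
    simp only [Finset.mem_filter, Finset.mem_univ, true_and] at hu
    show Function.update v a (u a) = u
    funext l
    by_cases hl : l = a
    · subst hl; simp
    · rw [Function.update_of_ne hl]; exact (hu l hl).symm
  · intro t ht; simp
  · intro u hu
    simp only [Finset.mem_filter, Finset.mem_univ, true_and] at hu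
    congr 1
    funext l
    by_cases hl : l = a
    · subst hl; simp
    · rw [Function.update_of_ne hl]; exact hu l hl

end LatticeW
namespace LatticeW

variable {N : ℕ}

lemma fsite_apply (a : Fin N) (M : Matrix (Fin 2) (Fin 2) ℂ) (v w : St N) :
    fsite N a M v w = if ∀ l, l ≠ a → v l = w l then M (v a) (w a) else 0 := rfl

lemma fsite_apply_ne (a : Fin N) (M : Matrix (Fin 2) (Fin 2) ℂ) {v w : St N}
    (h : ¬ ∀ l, l ≠ a → v l = w l) : fsite N a M v w = 0 := by
  rw [fsite_apply, if_neg h]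

lemma fsite_apply_upd (a : Fin N) (M : Matrix (Fin 2) (Fin 2) ℂ) (v : St N) (t : Fin 2) :
    fsite N a M v (Function.update v a t) = M (v a) t := by
  rw [fsite_apply, if_pos (fun l hl => (Function.update_of_ne hl _ _).symm)]
  simp

lemma mul_fsite_apply (A : Op N) (a : Fin N) (M : Matrix (Fin 2) (Fin 2) ℂ) (v w : St N) :
    (fsite N a M * A) v w = ∑ t : Fin 2, M (v a) t * A (Function.update v a t) w := by
  rw [Matrix.mul_apply]
  rw [sum_eq_two a v (fun u => fsite N a M v u * A u w)
    (by
      intro u hu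
      have h0 : fsite N a M v u = 0 :=
        fsite_apply_ne a M (fun h => hu (fun l hl => (h l hl).symm))
      show fsite N a M v u * A u w = 0
      rw [h0, zero_mul])]
  refine Finset.sum_congr rfl (fun t _ => ?_)
  show fsite N a M v (Function.update v a t) * A (Function.update v a t) w = _
  rw [fsite_apply_upd]

lemma fsite_mul_same (a : Fin N) (M M' : Matrix (Fin 2) (Fin 2) ℂ) :
    fsite N a M * fsite N a M' = fsite N a (M * M') := by
  ext v w
  rw [mul_fsite_apply]
  rw [fsite_apply]
  by_cases h : ∀ l, l ≠ a → v l = w l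
  · rw [if_pos h, Matrix.mul_apply]
    refine Finset.sum_congr rfl (fun t _ => ?_)
    rw [fsite_apply, if_pos, Function.update_self]
    intro l hl; rw [Function.update_of_ne hl]; exact h l hl
  · rw [if_neg h]
    refine Finset.sum_eq_zero (fun t _ => ?_)
    rw [fsite_apply_ne, mul_zero]
    intro hc
    exact h (fun l hl => by rw [← hc l hl, Function.update_of_ne hl])

lemma fsite_mul_ne {a b : Fin N} (hab : a ≠ b) (M M' : Matrix (Fin 2) (Fin 2) ℂ) :
    fsite N a M * fsite N b M' =
      fun v w => if ∀ l, l ≠ a → l ≠ b → v l = w l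
        then M (v a) (w a) * M' (v b) (w b) else 0 := by
  ext v w
  rw [mul_fsite_apply]
  by_cases h : ∀ l, l ≠ a → l ≠ b → v l = w l
  · rw [if_pos h]
    have hsplit : ∀ t : Fin 2,
        fsite N b M' (Function.update v a t) w =
        (if t = w a then M' (v b) (w b) else 0) := by
      intro t
      by_cases ht : t = w a
      · subst ht
        rw [fsite_apply, if_pos, if_pos rfl, Function.update_of_ne (fun h => hab (by simpa using h.symm))]
        intro l hl
        by_cases hla : l = a
        · subst hla; simp
        · rw [Function.update_of_ne hla]; exact h l hla hl
      · rw [if_neg ht, fsite_apply_ne]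
        intro hc
        have := hc a hab
        rw [Function.update_self] at this
        exact ht this
    calc ∑ t : Fin 2, M (v a) t * fsite N b M' (Function.update v a t) w
        = ∑ t : Fin 2, M (v a) t * (if t = w a then M' (v b) (w b) else 0) := by
          refine Finset.sum_congr rfl (fun t _ => ?_)
          rw [hsplit t]
      _ = M (v a) (w a) * M' (v b) (w b) := by
          rw [Finset.sum_eq_single (w a)]
          · rw [if_pos rfl]
          · intro t _ ht; rw [if_neg ht, mul_zero]
          · intro hmem; exact absurd (Finset.mem_univ _) hmem
  · rw [if_neg h]
    refine Finset.sum_eq_zero (fun t _ => ?_)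
    rw [fsite_apply_ne, mul_zero]
    intro hc
    refine h (fun l hla hlb => ?_)
    rw [← hc l hlb, Function.update_of_ne hla]

lemma fsite_comm {a b : Fin N} (hab : a ≠ b) (M M' : Matrix (Fin 2) (Fin 2) ℂ) :
    fsite N a M * fsite N b M' = fsite N b M' * fsite N a M := by
  rw [fsite_mul_ne hab, fsite_mul_ne (Ne.symm hab)]
  funext v w
  by_cases h : ∀ l, l ≠ a → l ≠ b → v l = w l
  · rw [if_pos h, if_pos (fun l h1 h2 => h l h2 h1), mul_comm]
  · rw [if_neg h, if_neg (fun hc => h (fun l h1 h2 => hc l h2 h1))]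

lemma fsite_one (a : Fin N) : fsite N a 1 = 1 := by
  ext v w
  rw [fsite_apply]
  by_cases h : ∀ l, l ≠ a → v l = w l
  · rw [if_pos h, Matrix.one_apply, Matrix.one_apply]
    by_cases hva : v a = w a
    · rw [if_pos hva, if_pos]
      funext l
      by_cases hl : l = a
      · subst hl; exact hva
      · exact h l hl
    · rw [if_neg hva, if_neg]
      intro hc; exact hva (congrFun hc a)
  · rw [if_neg h, Matrix.one_apply, if_neg]
    intro hc
    exact h (fun l _ => congrFun hc l)

lemma fsite_zero (a : Fin N) : fsite N a 0 = 0 := by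
  ext v w; rw [fsite_apply]; simp

lemma fsite_add (a : Fin N) (M M' : Matrix (Fin 2) (Fin 2) ℂ) :
    fsite N a M + fsite N a M' = fsite N a (M + M') := by
  ext v w
  rw [Matrix.add_apply, fsite_apply, fsite_apply, fsite_apply]
  by_cases h : ∀ l, l ≠ a → v l = w l
  · simp [if_pos h]
  · simp [if_neg h]

lemma diagonal_mul_fsite_eq (F G : St N → ℂ) (a : Fin N) (M : Matrix (Fin 2) (Fin 2) ℂ)
    (h : ∀ v w : St N, (∀ l, l ≠ a → v l = w l) → M (v a) (w a) * F v = M (v a) (w a) * G w) :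
    Matrix.diagonal F * fsite N a M = fsite N a M * Matrix.diagonal G := by
  ext v w
  rw [Matrix.diagonal_mul, Matrix.mul_diagonal, fsite_apply]
  by_cases hc : ∀ l, l ≠ a → v l = w l
  · rw [if_pos hc]
    rw [mul_comm (F v), h v w hc, mul_comm]
  · rw [if_neg hc, mul_zero, zero_mul]

lemma diag_fsite_flip (F : St N → ℂ) (a : Fin N) (M : Matrix (Fin 2) (Fin 2) ℂ)
    (hM : ∀ t, M t t = 0)
    (hF : ∀ v w : St N, (∀ l, l ≠ a → v l = w l) → v a ≠ w a → F v = -F w) :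
    Matrix.diagonal F * fsite N a M = -(fsite N a M * Matrix.diagonal F) := by
  have h1 : Matrix.diagonal F * fsite N a M
      = fsite N a M * Matrix.diagonal (fun v => -F v) := by
    apply diagonal_mul_fsite_eq
    intro v w hvw
    by_cases hva : v a = w a
    · rw [hva, hM, zero_mul, zero_mul]
    · rw [hF v w hvw hva]
  rw [h1]
  have h2 : Matrix.diagonal (fun v : St N => -F v) = -Matrix.diagonal F := by
    rw [← Matrix.diagonal_neg]
  rw [h2, mul_neg]

lemma diag_fsite_indep (F : St N → ℂ) (a : Fin N) (M : Matrix (Fin 2) (Fin 2) ℂ)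
    (hF : ∀ v w : St N, (∀ l, l ≠ a → v l = w l) → F v = F w) :
    Matrix.diagonal F * fsite N a M = fsite N a M * Matrix.diagonal F := by
  apply diagonal_mul_fsite_eq
  intro v w hvw
  rw [hF v w hvw]

end LatticeW
namespace LatticeW

variable {N : ℕ}

def Dstr (N j : ℕ) : St N → ℂ := fun v =>
  ∏ l ∈ Finset.univ.filter (fun l : Fin N => (l : ℕ) < j), (Complex.I * zval (v l))

def Dinv (N j : ℕ) : St N → ℂ := fun v =>
  ∏ l ∈ Finset.univ.filter (fun l : Fin N => (l : ℕ) < j), (Complex.I * zval (v l))⁻¹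

def KF (N : ℕ) : St N → ℂ := fun v => ∏ l, (Complex.I * zval (v l))

lemma ad_eq {j : ℕ} (h : j < N) :
    ad N j = Complex.I ^ j • (Matrix.diagonal (Dstr N j) * fsite N ⟨j, h⟩ σp) := by
  rw [ad, site_eq_fsite h]; rfl

lemma an_eq {j : ℕ} (h : j < N) :
    an N j = (Complex.I ^ j)⁻¹ • (Matrix.diagonal (Dinv N j) * fsite N ⟨j, h⟩ σm) := by
  rw [an, site_eq_fsite h]; rfl

lemma ad_of_ge {j : ℕ} (h : ¬ j < N) : ad N j = 0 := by
  rw [ad, site_of_ge h, mul_zero, smul_zero]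

lemma an_of_ge {j : ℕ} (h : ¬ j < N) : an N j = 0 := by
  rw [an, site_of_ge h, mul_zero, smul_zero]

lemma Kop_eq : Kop N = Matrix.diagonal (KF N) := rfl

lemma zval_flip {t s : Fin 2} (h : t ≠ s) : zval t = -zval s := by
  fin_cases t <;> fin_cases s <;> simp_all [zval]

lemma prod_flip {s : Finset (Fin N)} {a : Fin N} (ha : a ∈ s) (g : Fin N → Fin 2 → ℂ)
    (v w : St N) (hvw : ∀ l, l ≠ a → v l = w l) (hflip : g a (v a) = - g a (w a)) :
    ∏ l ∈ s, g l (v l) = - ∏ l ∈ s, g l (w l) := by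
  rw [Finset.prod_eq_mul_prod_sdiff_singleton_of_mem ha (fun l => g l (v l)),
    Finset.prod_eq_mul_prod_sdiff_singleton_of_mem ha (fun l => g l (w l))]
  have hrest : ∏ l ∈ s \ {a}, g l (v l) = ∏ l ∈ s \ {a}, g l (w l) :=
    Finset.prod_congr rfl
      (fun l hl => by rw [hvw l (by simpa using (Finset.mem_sdiff.mp hl).2)])
  rw [hrest, hflip, neg_mul]

lemma prod_indep {s : Finset (Fin N)} {a : Fin N} (ha : a ∉ s) (g : Fin N → Fin 2 → ℂ)
    (v w : St N) (hvw : ∀ l, l ≠ a → v l = w l) :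
    ∏ l ∈ s, g l (v l) = ∏ l ∈ s, g l (w l) := by
  refine Finset.prod_congr rfl (fun l hl => ?_)
  rw [hvw l (fun h => ha (h ▸ hl))]

lemma Dstr_flip {j : ℕ} {a : Fin N} (ha : (a : ℕ) < j) (v w : St N)
    (hvw : ∀ l, l ≠ a → v l = w l) (hva : v a ≠ w a) :
    Dstr N j v = - Dstr N j w := by
  have := prod_flip (s := Finset.univ.filter (fun l : Fin N => (l : ℕ) < j))
    (by simp only [Finset.mem_filter, Finset.mem_univ, true_and]; exact ha)
    (fun _ t => Complex.I * zval t) v w hvw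
    (by show Complex.I * zval (v a) = -(Complex.I * zval (w a)); rw [zval_flip hva]; ring)
  simpa [Dstr] using this

lemma Dinv_flip {j : ℕ} {a : Fin N} (ha : (a : ℕ) < j) (v w : St N)
    (hvw : ∀ l, l ≠ a → v l = w l) (hva : v a ≠ w a) :
    Dinv N j v = - Dinv N j w := by
  have := prod_flip (s := Finset.univ.filter (fun l : Fin N => (l : ℕ) < j))
    (by simp only [Finset.mem_filter, Finset.mem_univ, true_and]; exact ha)
    (fun _ t => (Complex.I * zval t)⁻¹) v w hvw
    (by show (Complex.I * zval (v a))⁻¹ = -(Complex.I * zval (w a))⁻¹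
        rw [zval_flip hva,
          show Complex.I * -zval (w a) = -(Complex.I * zval (w a)) by ring, inv_neg])
  simpa [Dinv] using this

lemma KF_flip {a : Fin N} (v w : St N)
    (hvw : ∀ l, l ≠ a → v l = w l) (hva : v a ≠ w a) :
    KF N v = - KF N w := by
  have := prod_flip (s := Finset.univ) (Finset.mem_univ a)
    (fun _ t => Complex.I * zval t) v w hvw
    (by show Complex.I * zval (v a) = -(Complex.I * zval (w a)); rw [zval_flip hva]; ring)
  simpa [KF] using this

lemma Dstr_indep {j : ℕ} {a : Fin N} (ha : j ≤ (a : ℕ)) (v w : St N)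
    (hvw : ∀ l, l ≠ a → v l = w l) : Dstr N j v = Dstr N j w := by
  have := prod_indep (s := Finset.univ.filter (fun l : Fin N => (l : ℕ) < j))
    (by simp only [Finset.mem_filter, Finset.mem_univ, true_and]; omega)
    (fun _ t => Complex.I * zval t) v w hvw
  simpa [Dstr] using this

lemma Dinv_indep {j : ℕ} {a : Fin N} (ha : j ≤ (a : ℕ)) (v w : St N)
    (hvw : ∀ l, l ≠ a → v l = w l) : Dinv N j v = Dinv N j w := by
  have := prod_indep (s := Finset.univ.filter (fun l : Fin N => (l : ℕ) < j))
    (by simp only [Finset.mem_filter, Finset.mem_univ, true_and]; omega)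
    (fun _ t => (Complex.I * zval t)⁻¹) v w hvw
  simpa [Dinv] using this

lemma σp_eq : σp = !![0, 1; 0, 0] := by
  ext i j
  fin_cases i <;> fin_cases j <;> simp [σp, σx, σy] <;> ring

lemma σm_eq : σm = !![0, 0; 1, 0] := by
  ext i j
  fin_cases i <;> fin_cases j <;> simp [σm, σx, σy] <;> ring

lemma σp_diag (t : Fin 2) : σp t t = 0 := by
  fin_cases t <;> simp [σp_eq]

lemma σm_diag (t : Fin 2) : σm t t = 0 := by
  fin_cases t <;> simp [σm_eq]

lemma σp_mul_σp : σp * σp = 0 := by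
  rw [σp_eq]
  ext i j
  fin_cases i <;> fin_cases j <;> simp [Matrix.mul_apply, Fin.sum_univ_two]

lemma σm_mul_σm : σm * σm = 0 := by
  rw [σm_eq]
  ext i j
  fin_cases i <;> fin_cases j <;> simp [Matrix.mul_apply, Fin.sum_univ_two]

lemma σpm_mul : σp * σm + σm * σp = 1 := by
  rw [σp_eq, σm_eq]
  ext i j
  fin_cases i <;> fin_cases j <;>
    simp [Matrix.mul_apply, Fin.sum_univ_two, Matrix.one_apply]

end LatticeW
namespace LatticeW

variable {N : ℕ}

def AA (N : ℕ) (a : Fin N) : Op N := Matrix.diagonal (Dstr N a) * fsite N a σp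
def BB (N : ℕ) (a : Fin N) : Op N := Matrix.diagonal (Dinv N a) * fsite N a σm

lemma ad_AA {j : ℕ} (h : j < N) : ad N j = Complex.I ^ j • AA N ⟨j, h⟩ := ad_eq h

lemma an_BB {j : ℕ} (h : j < N) : an N j = (Complex.I ^ j)⁻¹ • BB N ⟨j, h⟩ := an_eq h

lemma diag_comm (F G : St N → ℂ) :
    Matrix.diagonal F * Matrix.diagonal G = Matrix.diagonal G * Matrix.diagonal F := by
  rw [Matrix.diagonal_mul_diagonal, Matrix.diagonal_mul_diagonal]
  exact congrArg Matrix.diagonal (funext fun v => mul_comm (F v) (G v))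

lemma ladder_anti {a b : Fin N} (hab : a ≠ b) (F G : St N → ℂ)
    (M M' : Matrix (Fin 2) (Fin 2) ℂ)
    (hGa : Matrix.diagonal G * fsite N a M = -(fsite N a M * Matrix.diagonal G))
    (hFb : Matrix.diagonal F * fsite N b M' = fsite N b M' * Matrix.diagonal F) :
    (Matrix.diagonal F * fsite N a M) * (Matrix.diagonal G * fsite N b M')
      + (Matrix.diagonal G * fsite N b M') * (Matrix.diagonal F * fsite N a M) = 0 := by
  have hd := diag_comm F G
  have hf := fsite_comm hab M M'
  have h1 : fsite N a M * Matrix.diagonal G = -(Matrix.diagonal G * fsite N a M) := by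
    rw [hGa, neg_neg]
  have h2 : fsite N b M' * Matrix.diagonal F = Matrix.diagonal F * fsite N b M' := hFb.symm
  have e1 : Matrix.diagonal F * fsite N a M * (Matrix.diagonal G * fsite N b M')
      = -(Matrix.diagonal F * (Matrix.diagonal G * (fsite N a M * fsite N b M'))) := by
    calc Matrix.diagonal F * fsite N a M * (Matrix.diagonal G * fsite N b M')
        = Matrix.diagonal F * (fsite N a M * Matrix.diagonal G) * fsite N b M' := by
          noncomm_ring
      _ = Matrix.diagonal F * (-(Matrix.diagonal G * fsite N a M)) * fsite N b M' := by
          rw [h1]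
      _ = -(Matrix.diagonal F * (Matrix.diagonal G * (fsite N a M * fsite N b M'))) := by
          noncomm_ring
  have e2 : Matrix.diagonal G * fsite N b M' * (Matrix.diagonal F * fsite N a M)
      = Matrix.diagonal F * (Matrix.diagonal G * (fsite N a M * fsite N b M')) := by
    calc Matrix.diagonal G * fsite N b M' * (Matrix.diagonal F * fsite N a M)
        = Matrix.diagonal G * (fsite N b M' * Matrix.diagonal F) * fsite N a M := by
          noncomm_ring
      _ = Matrix.diagonal G * (Matrix.diagonal F * fsite N b M') * fsite N a M := by
          rw [h2]
      _ = (Matrix.diagonal G * Matrix.diagonal F) * (fsite N b M' * fsite N a M) := by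
          noncomm_ring
      _ = (Matrix.diagonal F * Matrix.diagonal G) * (fsite N a M * fsite N b M') := by
          rw [← hd, ← hf]
      _ = Matrix.diagonal F * (Matrix.diagonal G * (fsite N a M * fsite N b M')) := by
          noncomm_ring
  rw [e1, e2, neg_add_cancel]

lemma ladder_mul_same (a : Fin N) (F G : St N → ℂ) (M M' : Matrix (Fin 2) (Fin 2) ℂ)
    (hGa : Matrix.diagonal G * fsite N a M = fsite N a M * Matrix.diagonal G) :
    (Matrix.diagonal F * fsite N a M) * (Matrix.diagonal G * fsite N a M')
      = (Matrix.diagonal F * Matrix.diagonal G) * fsite N a (M * M') := by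
  calc (Matrix.diagonal F * fsite N a M) * (Matrix.diagonal G * fsite N a M')
      = Matrix.diagonal F * (fsite N a M * Matrix.diagonal G) * fsite N a M' := by
        noncomm_ring
    _ = Matrix.diagonal F * (Matrix.diagonal G * fsite N a M) * fsite N a M' := by
        rw [hGa]
    _ = (Matrix.diagonal F * Matrix.diagonal G) * (fsite N a M * fsite N a M') := by
        noncomm_ring
    _ = (Matrix.diagonal F * Matrix.diagonal G) * fsite N a (M * M') := by
        rw [fsite_mul_same]

lemma AA_anti_lt {a b : Fin N} (hab : (a : ℕ) < (b : ℕ)) :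
    AA N a * AA N b + AA N b * AA N a = 0 := by
  refine ladder_anti (Fin.ne_of_val_ne (Nat.ne_of_lt hab)) _ _ _ _ ?_ ?_
  · exact diag_fsite_flip _ _ _ σp_diag (fun v w h hn => Dstr_flip hab v w h hn)
  · exact diag_fsite_indep _ _ _ (fun v w h => Dstr_indep (le_of_lt hab) v w h)

lemma AA_anti (a b : Fin N) : AA N a * AA N b + AA N b * AA N a = 0 := by
  rcases lt_trichotomy (a : ℕ) (b : ℕ) with h | h | h
  · exact AA_anti_lt h
  · have : a = b := Fin.ext h
    subst this
    have : AA N a * AA N a = 0 := by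
      rw [AA, ladder_mul_same _ _ _ _ _
        (diag_fsite_indep _ _ _ (fun v w hh => Dstr_indep (le_refl _) v w hh)),
        σp_mul_σp, fsite_zero, mul_zero]
    rw [this, add_zero]
  · rw [add_comm]; exact AA_anti_lt h

lemma BB_anti_lt {a b : Fin N} (hab : (a : ℕ) < (b : ℕ)) :
    BB N a * BB N b + BB N b * BB N a = 0 := by
  refine ladder_anti (Fin.ne_of_val_ne (Nat.ne_of_lt hab)) _ _ _ _ ?_ ?_
  · exact diag_fsite_flip _ _ _ σm_diag (fun v w h hn => Dinv_flip hab v w h hn)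
  · exact diag_fsite_indep _ _ _ (fun v w h => Dinv_indep (le_of_lt hab) v w h)

lemma BB_anti (a b : Fin N) : BB N a * BB N b + BB N b * BB N a = 0 := by
  rcases lt_trichotomy (a : ℕ) (b : ℕ) with h | h | h
  · exact BB_anti_lt h
  · have : a = b := Fin.ext h
    subst this
    have : BB N a * BB N a = 0 := by
      rw [BB, ladder_mul_same _ _ _ _ _
        (diag_fsite_indep _ _ _ (fun v w hh => Dinv_indep (le_refl _) v w hh)),
        σm_mul_σm, fsite_zero, mul_zero]
    rw [this, add_zero]
  · rw [add_comm]; exact BB_anti_lt h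

lemma AB_anti {a b : Fin N} (hab : a ≠ b) :
    AA N a * BB N b + BB N b * AA N a = 0 := by
  rcases lt_or_gt_of_ne (fun h : (a : ℕ) = (b : ℕ) => hab (Fin.ext h)) with h | h
  · refine ladder_anti hab _ _ _ _ ?_ ?_
    · exact diag_fsite_flip _ _ _ σp_diag (fun v w hh hn => Dinv_flip h v w hh hn)
    · exact diag_fsite_indep _ _ _ (fun v w hh => Dstr_indep (le_of_lt h) v w hh)
  · rw [add_comm]
    refine ladder_anti (Ne.symm hab) _ _ _ _ ?_ ?_
    · exact diag_fsite_flip _ _ _ σm_diag (fun v w hh hn => Dstr_flip h v w hh hn)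
    · exact diag_fsite_indep _ _ _ (fun v w hh => Dinv_indep (le_of_lt h) v w hh)

lemma Dstr_ne_zero (j : ℕ) (v : St N) : Dstr N j v ≠ 0 := by
  refine Finset.prod_ne_zero_iff.mpr (fun l _ => ?_)
  refine mul_ne_zero Complex.I_ne_zero ?_
  by_cases h : v l = 0 <;> simp [zval, h]

lemma Dinv_eq_inv (j : ℕ) (v : St N) : Dinv N j v = (Dstr N j v)⁻¹ := by
  rw [Dstr, Dinv, ← Finset.prod_inv_distrib]

lemma AB_same (a : Fin N) : AA N a * BB N a + BB N a * AA N a = 1 := by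
  have h1 : AA N a * BB N a = Matrix.diagonal (fun v => Dstr N a v * Dinv N a v) *
      fsite N a (σp * σm) := by
    rw [AA, BB, ladder_mul_same _ _ _ _ _
      (diag_fsite_indep _ _ _ (fun v w hh => Dinv_indep (le_refl _) v w hh)),
      Matrix.diagonal_mul_diagonal]
  have h2 : BB N a * AA N a = Matrix.diagonal (fun v => Dinv N a v * Dstr N a v) *
      fsite N a (σm * σp) := by
    rw [AA, BB, ladder_mul_same _ _ _ _ _
      (diag_fsite_indep _ _ _ (fun v w hh => Dstr_indep (le_refl _) v w hh)),
      Matrix.diagonal_mul_diagonal]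
  have hone : ∀ v : St N, Dstr N a v * Dinv N a v = 1 := fun v => by
    rw [Dinv_eq_inv, mul_inv_cancel₀ (Dstr_ne_zero _ v)]
  have hone' : ∀ v : St N, Dinv N a v * Dstr N a v = 1 := fun v => by
    rw [mul_comm]; exact hone v
  rw [h1, h2]
  have d1 : Matrix.diagonal (fun v : St N => Dstr N a v * Dinv N a v) = 1 := by
    rw [show (fun v : St N => Dstr N a v * Dinv N a v) = fun _ => (1 : ℂ) from funext hone,
      Matrix.diagonal_one]
  have d2 : Matrix.diagonal (fun v : St N => Dinv N a v * Dstr N a v) = 1 := by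
    rw [show (fun v : St N => Dinv N a v * Dstr N a v) = fun _ => (1 : ℂ) from funext hone',
      Matrix.diagonal_one]
  rw [d1, d2, one_mul, one_mul, fsite_add, σpm_mul, fsite_one]

lemma K_AA (a : Fin N) : Kop N * AA N a = -(AA N a * Kop N) := by
  have hflip : Matrix.diagonal (KF N) * fsite N a σp = -(fsite N a σp * Matrix.diagonal (KF N)) :=
    diag_fsite_flip _ _ _ σp_diag (fun v w h hn => KF_flip v w h hn)
  have h1 : fsite N a σp * Matrix.diagonal (KF N) = -(Matrix.diagonal (KF N) * fsite N a σp) := by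
    rw [hflip, neg_neg]
  rw [Kop_eq, AA]
  calc Matrix.diagonal (KF N) * (Matrix.diagonal (Dstr N a) * fsite N a σp)
      = Matrix.diagonal (Dstr N a) * Matrix.diagonal (KF N) * fsite N a σp := by
        rw [← mul_assoc, diag_comm]
    _ = -(Matrix.diagonal (Dstr N a) * (fsite N a σp * Matrix.diagonal (KF N))) := by
        rw [h1]; noncomm_ring
    _ = -(Matrix.diagonal (Dstr N a) * fsite N a σp * Matrix.diagonal (KF N)) := by
        rw [mul_assoc]

lemma K_BB (a : Fin N) : Kop N * BB N a = -(BB N a * Kop N) := by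
  have hflip : Matrix.diagonal (KF N) * fsite N a σm = -(fsite N a σm * Matrix.diagonal (KF N)) :=
    diag_fsite_flip _ _ _ σm_diag (fun v w h hn => KF_flip v w h hn)
  have h1 : fsite N a σm * Matrix.diagonal (KF N) = -(Matrix.diagonal (KF N) * fsite N a σm) := by
    rw [hflip, neg_neg]
  rw [Kop_eq, BB]
  calc Matrix.diagonal (KF N) * (Matrix.diagonal (Dinv N a) * fsite N a σm)
      = Matrix.diagonal (Dinv N a) * Matrix.diagonal (KF N) * fsite N a σm := by
        rw [← mul_assoc, diag_comm]
    _ = -(Matrix.diagonal (Dinv N a) * (fsite N a σm * Matrix.diagonal (KF N))) := by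
        rw [h1]; noncomm_ring
    _ = -(Matrix.diagonal (Dinv N a) * fsite N a σm * Matrix.diagonal (KF N)) := by
        rw [mul_assoc]

end LatticeW
namespace LatticeW

variable {N : ℕ}

lemma car (a b : ℕ) (hb : b < N) :
    an N a * ad N b + ad N b * an N a = (if a = b then (1 : ℂ) else 0) • (1 : Op N) := by
  by_cases ha : a < N
  · rw [an_BB ha, ad_AA hb, smul_mul_assoc, mul_smul_comm, smul_mul_assoc, mul_smul_comm,
      smul_smul, smul_smul, mul_comm ((Complex.I : ℂ) ^ b), ← smul_add]
    by_cases hab : a = b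
    · subst hab
      have hBA : BB N ⟨a, ha⟩ * AA N ⟨a, hb⟩ + AA N ⟨a, hb⟩ * BB N ⟨a, ha⟩ = 1 := by
        rw [add_comm]; exact AB_same _
      rw [hBA, if_pos rfl,
        inv_mul_cancel₀ (pow_ne_zero _ Complex.I_ne_zero), one_smul]
    · have hne : (⟨b, hb⟩ : Fin N) ≠ ⟨a, ha⟩ := by
        intro h
        exact hab (by injection h; omega)
      have hAB : BB N ⟨a, ha⟩ * AA N ⟨b, hb⟩ + AA N ⟨b, hb⟩ * BB N ⟨a, ha⟩ = 0 := by
        rw [add_comm]; exact AB_anti hne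
      rw [hAB, if_neg hab, smul_zero, zero_smul]
  · have hab : a ≠ b := by omega
    rw [an_of_ge ha, if_neg hab, zero_smul, zero_mul, mul_zero, add_zero]

lemma adad (a b : ℕ) : ad N a * ad N b + ad N b * ad N a = 0 := by
  by_cases ha : a < N
  · by_cases hb : b < N
    · rw [ad_AA ha, ad_AA hb, smul_mul_assoc, mul_smul_comm, smul_mul_assoc, mul_smul_comm,
        smul_smul, smul_smul, mul_comm ((Complex.I : ℂ) ^ b), ← smul_add, AA_anti, smul_zero]
    · rw [ad_of_ge hb, zero_mul, mul_zero, add_zero]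
  · rw [ad_of_ge ha, zero_mul, mul_zero, add_zero]

lemma anan (a b : ℕ) : an N a * an N b + an N b * an N a = 0 := by
  by_cases ha : a < N
  · by_cases hb : b < N
    · rw [an_BB ha, an_BB hb, smul_mul_assoc, mul_smul_comm, smul_mul_assoc, mul_smul_comm,
        smul_smul, smul_smul, mul_comm (((Complex.I : ℂ) ^ b)⁻¹), ← smul_add, BB_anti, smul_zero]
    · rw [an_of_ge hb, zero_mul, mul_zero, add_zero]
  · rw [an_of_ge ha, zero_mul, mul_zero, add_zero]

lemma Kad (a : ℕ) : Kop N * ad N a = -(ad N a * Kop N) := by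
  by_cases ha : a < N
  · rw [ad_AA ha, mul_smul_comm, smul_mul_assoc, K_AA, smul_neg]
  · rw [ad_of_ge ha, mul_zero, zero_mul, neg_zero]

lemma Kan (a : ℕ) : Kop N * an N a = -(an N a * Kop N) := by
  by_cases ha : a < N
  · rw [an_BB ha, mul_smul_comm, smul_mul_assoc, K_BB, smul_neg]
  · rw [an_of_ge ha, mul_zero, zero_mul, neg_zero]

/-- commutator of a quadratic with `Kop`. -/
lemma quad_K (A B : Op N) (hA : Kop N * A = -(A * Kop N)) (hB : Kop N * B = -(B * Kop N)) :
    A * B * Kop N = Kop N * (A * B) := by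
  have hB' : B * Kop N = -(Kop N * B) := by rw [hB, neg_neg]
  calc A * B * Kop N = A * (B * Kop N) := by rw [mul_assoc]
    _ = A * (-(Kop N * B)) := by rw [hB']
    _ = -(A * Kop N) * B := by noncomm_ring
    _ = (Kop N * A) * B := by rw [← hA]
    _ = Kop N * (A * B) := by rw [mul_assoc]

/-- commutator of a quadratic monomial against an operator with scalar anticommutators. -/
lemma comm2 (A B C : Op N) (α β : ℂ)
    (hA : A * C + C * A = α • (1 : Op N)) (hB : B * C + C * B = β • (1 : Op N)) :
    (A * B) * C - C * (A * B) = β • A - α • B := by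
  have hB' : B * C = β • (1 : Op N) - C * B := by
    rw [← hB]; abel
  have hA' : A * C = α • (1 : Op N) - C * A := by
    rw [← hA]; abel
  have key : (A * B) * C = β • A - α • B + C * (A * B) := by
    calc (A * B) * C = A * (B * C) := by rw [mul_assoc]
      _ = A * (β • (1 : Op N) - C * B) := by rw [hB']
      _ = β • A - (A * C) * B := by
          rw [mul_sub, mul_smul_comm, mul_one, mul_assoc]
      _ = β • A - (α • (1 : Op N) - C * A) * B := by rw [hA']
      _ = β • A - α • B + C * (A * B) := by
          rw [sub_mul, smul_mul_assoc, one_mul, mul_assoc]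
          abel
  rw [key]; abel

end LatticeW
namespace LatticeW

variable {N : ℕ}

def Sad (N : ℕ) : Op N := ∑ c ∈ Finset.range N, Complex.I ^ (c + 1) • ad N c

lemma Eop_eq : Eop N = Sad N * Kop N := rfl

lemma sum_delta (b : ℕ) (hb : b < N) (g : ℕ → ℂ) (X : Op N) :
    ∑ c ∈ Finset.range N, g c • ((if c = b then (1 : ℂ) else 0) • X) = g b • X := by
  have h : ∀ c ∈ Finset.range N, g c • ((if c = b then (1 : ℂ) else 0) • X)
      = if c = b then g c • X else 0 := by
    intro c _
    by_cases hc : c = b <;> simp [hc]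
  rw [Finset.sum_congr rfl h, Finset.sum_ite_eq' (Finset.range N) b (fun c => g c • X),
    if_pos (Finset.mem_range.mpr hb)]

lemma sum_delta' (b : ℕ) (hb : b < N) (g : ℕ → ℂ) (X : Op N) :
    ∑ c ∈ Finset.range N, g c • ((if b = c then (1 : ℂ) else 0) • X) = g b • X := by
  have h : ∀ c ∈ Finset.range N, g c • ((if b = c then (1 : ℂ) else 0) • X)
      = g c • ((if c = b then (1 : ℂ) else 0) • X) := by
    intro c _
    by_cases hc : c = b <;> simp [hc, Ne.symm]
  rw [Finset.sum_congr rfl h, sum_delta b hb]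

lemma comm_sum (X : Op N) (T : ℕ → Op N) :
    X * (∑ c ∈ Finset.range N, T c) - (∑ c ∈ Finset.range N, T c) * X
      = ∑ c ∈ Finset.range N, (X * T c - T c * X) := by
  rw [Finset.mul_sum, Finset.sum_mul, ← Finset.sum_sub_distrib]

lemma comm_smul (c : ℂ) (X Y : Op N) :
    X * (c • Y) - (c • Y) * X = c • (X * Y - Y * X) := by
  rw [mul_smul_comm, smul_mul_assoc, smul_sub]

/-- `[ad a · ad b, F] = i^b • ad a − i^a • ad b`. -/
lemma comm_adad_F (a b : ℕ) (ha : a < N) (hb : b < N) :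
    (ad N a * ad N b) * Fop N - Fop N * (ad N a * ad N b)
      = Complex.I ^ b • ad N a - Complex.I ^ a • ad N b := by
  rw [Fop, Finset.mul_sum, Finset.sum_mul, ← Finset.sum_sub_distrib]
  have h : ∀ c ∈ Finset.range N,
      (ad N a * ad N b) * (Complex.I ^ c • an N c)
        - (Complex.I ^ c • an N c) * (ad N a * ad N b)
      = Complex.I ^ c • ((if c = b then (1 : ℂ) else 0) • ad N a)
        - Complex.I ^ c • ((if c = a then (1 : ℂ) else 0) • ad N b) := by
    intro c _
    rw [mul_smul_comm, smul_mul_assoc, ← smul_sub,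
      comm2 (ad N a) (ad N b) (an N c) (if c = a then 1 else 0) (if c = b then 1 else 0)
        (by rw [add_comm]; exact car c a ha) (by rw [add_comm]; exact car c b hb),
      smul_sub]
  rw [Finset.sum_congr rfl h, Finset.sum_sub_distrib,
    sum_delta b hb, sum_delta a ha]

/-- `[ad a · ad b, Sad] = 0`. -/
lemma comm_adad_S (a b : ℕ) :
    (ad N a * ad N b) * Sad N - Sad N * (ad N a * ad N b) = 0 := by
  rw [Sad, Finset.mul_sum, Finset.sum_mul, ← Finset.sum_sub_distrib]
  refine Finset.sum_eq_zero (fun c _ => ?_)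
  rw [mul_smul_comm, smul_mul_assoc, ← smul_sub,
    comm2 (ad N a) (ad N b) (ad N c) 0 0
      (by rw [zero_smul]; exact adad a c) (by rw [zero_smul]; exact adad b c)]
  simp

/-- `[an a · an b, F] = 0`. -/
lemma comm_anan_F (a b : ℕ) :
    (an N a * an N b) * Fop N - Fop N * (an N a * an N b) = 0 := by
  rw [Fop, Finset.mul_sum, Finset.sum_mul, ← Finset.sum_sub_distrib]
  refine Finset.sum_eq_zero (fun c _ => ?_)
  rw [mul_smul_comm, smul_mul_assoc, ← smul_sub,
    comm2 (an N a) (an N b) (an N c) 0 0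
      (by rw [zero_smul]; exact anan a c) (by rw [zero_smul]; exact anan b c)]
  simp

/-- `[an a · an b, Sad] = i^{b+1} • an a − i^{a+1} • an b`. -/
lemma comm_anan_S (a b : ℕ) (ha : a < N) (hb : b < N) :
    (an N a * an N b) * Sad N - Sad N * (an N a * an N b)
      = Complex.I ^ (b + 1) • an N a - Complex.I ^ (a + 1) • an N b := by
  rw [Sad, Finset.mul_sum, Finset.sum_mul, ← Finset.sum_sub_distrib]
  have h : ∀ c ∈ Finset.range N,
      (an N a * an N b) * (Complex.I ^ (c + 1) • ad N c)
        - (Complex.I ^ (c + 1) • ad N c) * (an N a * an N b)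
      = Complex.I ^ (c + 1) • ((if b = c then (1 : ℂ) else 0) • an N a)
        - Complex.I ^ (c + 1) • ((if a = c then (1 : ℂ) else 0) • an N b) := by
    intro c hc
    have hcN : c < N := Finset.mem_range.mp hc
    rw [mul_smul_comm, smul_mul_assoc, ← smul_sub,
      comm2 (an N a) (an N b) (ad N c) (if a = c then 1 else 0) (if b = c then 1 else 0)
        (car a c hcN) (car b c hcN),
      smul_sub]
  rw [Finset.sum_congr rfl h, Finset.sum_sub_distrib,
    sum_delta' b hb, sum_delta' a ha]

/-- `[ad a · an b, F] = −(i^a • an b)`. -/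
lemma comm_adan_F (a b : ℕ) (ha : a < N) :
    (ad N a * an N b) * Fop N - Fop N * (ad N a * an N b)
      = -(Complex.I ^ a • an N b) := by
  rw [Fop, Finset.mul_sum, Finset.sum_mul, ← Finset.sum_sub_distrib]
  have h : ∀ c ∈ Finset.range N,
      (ad N a * an N b) * (Complex.I ^ c • an N c)
        - (Complex.I ^ c • an N c) * (ad N a * an N b)
      = (0 : Op N) - Complex.I ^ c • ((if c = a then (1 : ℂ) else 0) • an N b) := by
    intro c _
    rw [mul_smul_comm, smul_mul_assoc, ← smul_sub,
      comm2 (ad N a) (an N b) (an N c) (if c = a then 1 else 0) 0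
        (by rw [add_comm]; exact car c a ha) (by rw [zero_smul]; exact anan b c),
      smul_sub, zero_smul, smul_zero]
  rw [Finset.sum_congr rfl h, Finset.sum_sub_distrib, sum_delta a ha]
  simp

/-- `[ad a · an b, Sad] = i^{b+1} • ad a`. -/
lemma comm_adan_S (a b : ℕ) (hb : b < N) :
    (ad N a * an N b) * Sad N - Sad N * (ad N a * an N b)
      = Complex.I ^ (b + 1) • ad N a := by
  rw [Sad, Finset.mul_sum, Finset.sum_mul, ← Finset.sum_sub_distrib]
  have h : ∀ c ∈ Finset.range N,
      (ad N a * an N b) * (Complex.I ^ (c + 1) • ad N c)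
        - (Complex.I ^ (c + 1) • ad N c) * (ad N a * an N b)
      = Complex.I ^ (c + 1) • ((if b = c then (1 : ℂ) else 0) • ad N a) - (0 : Op N) := by
    intro c hc
    have hcN : c < N := Finset.mem_range.mp hc
    rw [mul_smul_comm, smul_mul_assoc, ← smul_sub,
      comm2 (ad N a) (an N b) (ad N c) 0 (if b = c then 1 else 0)
        (by rw [zero_smul]; exact adad a c) (car b c hcN),
      smul_sub, zero_smul, smul_zero]
  rw [Finset.sum_congr rfl h, Finset.sum_sub_distrib, sum_delta' b hb]
  simp

/-- `[1, T] = 0`. -/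
lemma comm_one (T : Op N) : (1 : Op N) * T - T * (1 : Op N) = 0 := by
  rw [one_mul, mul_one, sub_self]

end LatticeW
namespace LatticeW

variable {N : ℕ}

lemma comm_smul' (c : ℂ) (Y X : Op N) :
    (c • Y) * X - X * (c • Y) = c • (Y * X - X * Y) := by
  rw [smul_mul_assoc, mul_smul_comm, smul_sub]

lemma comm_add (A B T : Op N) :
    (A + B) * T - T * (A + B) = (A * T - T * A) + (B * T - T * B) := by noncomm_ring

lemma comm_sub (A B T : Op N) :
    (A - B) * T - T * (A - B) = (A * T - T * A) - (B * T - T * B) := by noncomm_ring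

lemma comm_one' (T : Op N) : (1 : Op N) * T - T * (1 : Op N) = 0 := by
  rw [one_mul, mul_one, sub_self]

lemma Ip1 (j : ℕ) : (Complex.I : ℂ) ^ (j + 1) = Complex.I ^ j * Complex.I := pow_succ _ _

lemma Ip2 (j : ℕ) : (Complex.I : ℂ) ^ (j + 2) = -(Complex.I ^ j) := by
  rw [pow_add, Complex.I_sq, mul_neg_one]

lemma Ip11 (j : ℕ) : (Complex.I : ℂ) ^ (j + 1 + 1) = -(Complex.I ^ j) := by
  rw [show j + 1 + 1 = j + 2 by omega, Ip2]

lemma Ip21 (j : ℕ) : (Complex.I : ℂ) ^ (j + 2 + 1) = -(Complex.I ^ j * Complex.I) := by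
  rw [show j + 2 + 1 = (j + 1) + 2 by omega, Ip2, Ip1]

lemma assemble (W : Op N) (hK : W * Kop N = Kop N * W)
    (hS : W * Sad N - Sad N * W = 0) (hF : W * Fop N - Fop N * W = 0) :
    W * Eop N - Eop N * W = 0 ∧ W * Fop N - Fop N * W = 0 ∧
      W * Kop N - Kop N * W = 0 := by
  refine ⟨?_, hF, by rw [hK, sub_self]⟩
  rw [Eop_eq]
  have hWS : W * Sad N = Sad N * W := sub_eq_zero.mp hS
  have h : W * (Sad N * Kop N) = (Sad N * Kop N) * W := by
    rw [← mul_assoc, hWS, mul_assoc, hK, ← mul_assoc]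
  rw [h, sub_self]

section WBplus
variable (j : ℕ)

lemma WBp_K : WBp N j * Kop N = Kop N * WBp N j := by
  have k1 := quad_K (ad N j) (ad N (j+1)) (Kad _) (Kad _)
  have k2 := quad_K (ad N j) (ad N (j+2)) (Kad _) (Kad _)
  have k3 := quad_K (ad N (j+1)) (ad N (j+2)) (Kad _) (Kad _)
  rw [WBp, smul_mul_assoc, mul_smul_comm]
  congr 1
  simp only [add_mul, sub_mul, mul_add, mul_sub, smul_mul_assoc, mul_smul_comm, k1, k2, k3]

lemma WBp_S : WBp N j * Sad N - Sad N * WBp N j = 0 := by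
  rw [WBp, comm_smul', comm_sub, comm_add, comm_smul',
    comm_adad_S j (j+1), comm_adad_S j (j+2), comm_adad_S (j+1) (j+2)]
  simp

lemma WBp_F {j : ℕ} (h2 : j + 2 < N) : WBp N j * Fop N - Fop N * WBp N j = 0 := by
  have h0 : j < N := by omega
  have h1 : j + 1 < N := by omega
  rw [WBp, comm_smul', comm_sub, comm_add, comm_smul',
    comm_adad_F j (j+1) h0 h1, comm_adad_F j (j+2) h0 h2, comm_adad_F (j+1) (j+2) h1 h2]
  try rw [Ip2 j]
  try rw [Ip1 j]
  match_scalars <;> ring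

end WBplus

section WBminus
variable (j : ℕ)

lemma WBm_K : WBm N j * Kop N = Kop N * WBm N j := by
  have k1 := quad_K (an N j) (an N (j+1)) (Kan _) (Kan _)
  have k2 := quad_K (an N j) (an N (j+2)) (Kan _) (Kan _)
  have k3 := quad_K (an N (j+1)) (an N (j+2)) (Kan _) (Kan _)
  rw [WBm, smul_mul_assoc, mul_smul_comm]
  congr 1
  simp only [add_mul, sub_mul, mul_add, mul_sub, smul_mul_assoc, mul_smul_comm, k1, k2, k3]

lemma WBm_F : WBm N j * Fop N - Fop N * WBm N j = 0 := by
  rw [WBm, comm_smul', comm_sub, comm_add, comm_smul',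
    comm_anan_F j (j+1), comm_anan_F j (j+2), comm_anan_F (j+1) (j+2)]
  simp

lemma WBm_S {j : ℕ} (h2 : j + 2 < N) : WBm N j * Sad N - Sad N * WBm N j = 0 := by
  have h0 : j < N := by omega
  have h1 : j + 1 < N := by omega
  rw [WBm, comm_smul', comm_sub, comm_add, comm_smul',
    comm_anan_S j (j+1) h0 h1, comm_anan_S j (j+2) h0 h2, comm_anan_S (j+1) (j+2) h1 h2]
  try rw [Ip21 j]
  try rw [Ip11 j]
  try rw [Ip2 j]
  try rw [Ip1 j]
  match_scalars <;>
    first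
    | ring1
    | linear_combination (Complex.I ^ j) * Complex.I_mul_I
    | linear_combination (-(Complex.I ^ j)) * Complex.I_mul_I
    | linear_combination (Complex.I ^ j * Complex.I) * Complex.I_mul_I
    | linear_combination (-(Complex.I ^ j * Complex.I)) * Complex.I_mul_I
    | linear_combination (2 * Complex.I ^ j) * Complex.I_mul_I
    | linear_combination (-(2 * Complex.I ^ j)) * Complex.I_mul_I
    | linear_combination (2 * Complex.I ^ j * Complex.I) * Complex.I_mul_I
    | linear_combination (-(2 * Complex.I ^ j * Complex.I)) * Complex.I_mul_I
    | linear_combination ((-1 : ℂ) ^ j * Complex.I ^ j) * Complex.I_mul_I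
    | linear_combination (-((-1 : ℂ) ^ j * Complex.I ^ j)) * Complex.I_mul_I
    | linear_combination ((-1 : ℂ) ^ j * Complex.I ^ j * Complex.I) * Complex.I_mul_I
    | linear_combination (-((-1 : ℂ) ^ j * Complex.I ^ j * Complex.I)) * Complex.I_mul_I

end WBminus

section WBzero
variable (j : ℕ)

lemma WB0_K : WB0 N j * Kop N = Kop N * WB0 N j := by
  have k1 := quad_K (ad N j) (an N (j+1)) (Kad _) (Kan _)
  have k2 := quad_K (ad N j) (an N (j+2)) (Kad _) (Kan _)
  have k3 := quad_K (ad N (j+1)) (an N j) (Kad _) (Kan _)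
  have k4 := quad_K (ad N (j+1)) (an N (j+1)) (Kad _) (Kan _)
  have k5 := quad_K (ad N (j+1)) (an N (j+2)) (Kad _) (Kan _)
  have k6 := quad_K (ad N (j+2)) (an N j) (Kad _) (Kan _)
  have k7 := quad_K (ad N (j+2)) (an N (j+1)) (Kad _) (Kan _)
  rw [WB0, smul_mul_assoc, mul_smul_comm]
  congr 1
  simp only [add_mul, sub_mul, mul_add, mul_sub, smul_mul_assoc, mul_smul_comm,
    one_mul, mul_one, k1, k2, k3, k4, k5, k6, k7]

lemma WB0_F {j : ℕ} (h2 : j + 2 < N) : WB0 N j * Fop N - Fop N * WB0 N j = 0 := by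
  have h0 : j < N := by omega
  have h1 : j + 1 < N := by omega
  rw [WB0, comm_smul']
  simp only [comm_sub, comm_add, comm_smul', comm_one']
  rw [comm_adan_F j (j+1) h0, comm_adan_F j (j+2) h0,
    comm_adan_F (j+1) j h1, comm_adan_F (j+1) (j+1) h1, comm_adan_F (j+1) (j+2) h1,
    comm_adan_F (j+2) j h2, comm_adan_F (j+2) (j+1) h2]
  try rw [Ip2 j]
  try rw [Ip1 j]
  match_scalars <;>
    first
    | ring1
    | linear_combination (Complex.I ^ j) * Complex.I_mul_I
    | linear_combination (-(Complex.I ^ j)) * Complex.I_mul_I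
    | linear_combination (Complex.I ^ j * Complex.I) * Complex.I_mul_I
    | linear_combination (-(Complex.I ^ j * Complex.I)) * Complex.I_mul_I
    | linear_combination ((1/2 : ℂ) * Complex.I ^ j) * Complex.I_mul_I
    | linear_combination (-((1/2 : ℂ) * Complex.I ^ j)) * Complex.I_mul_I
    | linear_combination ((1/2 : ℂ) * Complex.I ^ j * Complex.I) * Complex.I_mul_I
    | linear_combination (-((1/2 : ℂ) * Complex.I ^ j * Complex.I)) * Complex.I_mul_I

lemma WB0_S {j : ℕ} (h2 : j + 2 < N) : WB0 N j * Sad N - Sad N * WB0 N j = 0 := by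
  have h0 : j < N := by omega
  have h1 : j + 1 < N := by omega
  rw [WB0, comm_smul']
  simp only [comm_sub, comm_add, comm_smul', comm_one']
  rw [comm_adan_S j (j+1) h1, comm_adan_S j (j+2) h2,
    comm_adan_S (j+1) j h0, comm_adan_S (j+1) (j+1) h1, comm_adan_S (j+1) (j+2) h2,
    comm_adan_S (j+2) j h0, comm_adan_S (j+2) (j+1) h1]
  try rw [Ip21 j]
  try rw [Ip11 j]
  try rw [Ip2 j]
  try rw [Ip1 j]
  match_scalars <;>
    first
    | ring1
    | linear_combination (Complex.I ^ j) * Complex.I_mul_I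
    | linear_combination (-(Complex.I ^ j)) * Complex.I_mul_I
    | linear_combination (Complex.I ^ j * Complex.I) * Complex.I_mul_I
    | linear_combination (-(Complex.I ^ j * Complex.I)) * Complex.I_mul_I
    | linear_combination ((1/2 : ℂ) * Complex.I ^ j) * Complex.I_mul_I
    | linear_combination (-((1/2 : ℂ) * Complex.I ^ j)) * Complex.I_mul_I
    | linear_combination ((1/2 : ℂ) * Complex.I ^ j * Complex.I) * Complex.I_mul_I
    | linear_combination (-((1/2 : ℂ) * Complex.I ^ j * Complex.I)) * Complex.I_mul_I

end WBzero

end LatticeW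

/-- each `WB^α_j` commutes with `ρ(E), ρ(F), ρ(K)`. -/
theorem LatticeW.WB_commutes_Ures (N : ℕ) (hN : 3 ≤ N) (j : ℕ) (hj : j < N - 2)
    (α : Fin 3) :
    WB N α j * Eop N - Eop N * WB N α j = 0 ∧
    WB N α j * Fop N - Fop N * WB N α j = 0 ∧
    WB N α j * Kop N - Kop N * WB N α j = 0 := by
  have h2 : j + 2 < N := by omega
  fin_cases α
  · exact assemble _ (WBp_K j) (WBp_S j) (WBp_F h2)
  · exact assemble _ (WB0_K j) (WB0_S h2) (WB0_F h2)
  · exact assemble _ (WBm_K j) (WBm_S h2) (WBm_F j)
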